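/- Let α > 0. There exists a constant C_N > 0 such that for every w ∈ L¹(ℝ) ∩ L²(ℝ) whose Fourier transform ŵ satisfies ∫_ℝ |ξ|^α |ŵ(ξ)|² dξ < ∞, one has ‖w‖_{L²(ℝ)}^{2(1+α)} ≤ C_N (∫_ℝ |ξ|^α |ŵ(ξ)|² dξ) ‖w‖_{L¹(ℝ)}^{2α}. -/

import Mathlib

open MeasureTheory Real Set Filter
open scoped ENNReal

/-- The (non-unitary) Fourier transform of a real function:
`w^(ξ) = ∫ exp(-i x ξ) w(x) dx`. -/
noncomputable def fourierNC (w : ℝ → ℝ) (ξ : ℝ) : ℂ :=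
  ∫ x : ℝ, Complex.exp (-(Complex.I * x * ξ)) * w x

open scoped Topology

section NashAux
open Complex


lemma fourierNC_norm_le (w : ℝ → ℝ) (ξ : ℝ) :
    ‖fourierNC w ξ‖ ≤ ∫ x, |w x| := by
  refine (norm_integral_le_integral_norm _).trans_eq ?_
  congr 1 with x
  rw [norm_mul, Complex.norm_exp]
  simp [Complex.norm_real]

lemma fourierNC_continuous {w : ℝ → ℝ} (hw : Integrable w) :
    Continuous (fourierNC w) := by
  apply continuous_of_dominated (bound := fun x => |w x|)
  · intro ξ
    exact (Complex.continuous_exp.comp (by continuity)).aestronglyMeasurable.mul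
      (Complex.continuous_ofReal.comp_aestronglyMeasurable hw.1)
  · intro ξ
    filter_upwards with x
    rw [norm_mul, Complex.norm_exp]
    simp [Complex.norm_real]
  · exact hw.abs
  · filter_upwards with x
    exact (Complex.continuous_exp.comp (by continuity)).mul continuous_const

lemma integrand_integrable {w : ℝ → ℝ} (hw : Integrable w) (ξ : ℝ) :
    Integrable (fun x : ℝ => Complex.exp (-(Complex.I * x * ξ)) * w x) := by
  refine Integrable.mono' hw.abs
    ((Complex.continuous_exp.comp (by continuity)).aestronglyMeasurable.mul
      (Complex.continuous_ofReal.comp_aestronglyMeasurable hw.1)) ?_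
  filter_upwards with x
  rw [norm_mul, Complex.norm_exp]
  simp [Complex.norm_real]

lemma integrand_integrable' {w : ℝ → ℝ} (hw : Integrable w) (ξ : ℝ) :
    Integrable (fun x : ℝ => Complex.exp (Complex.I * x * ξ) * w x) := by
  refine Integrable.mono' hw.abs
    ((Complex.continuous_exp.comp (by continuity)).aestronglyMeasurable.mul
      (Complex.continuous_ofReal.comp_aestronglyMeasurable hw.1)) ?_
  filter_upwards with x
  rw [norm_mul, Complex.norm_exp]
  simp [Complex.norm_real]

lemma conj_fourierNC {w : ℝ → ℝ} (ξ : ℝ) :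
    (starRingEnd ℂ) (fourierNC w ξ) = ∫ x : ℝ, Complex.exp (Complex.I * x * ξ) * w x := by
  rw [fourierNC, ← integral_conj]
  congr 1 with x
  simp [← Complex.exp_conj, map_mul, Complex.conj_ofReal]

/-- The Gaussian kernel `∫ ξ, e^{-iuξ} e^{-tξ²} dξ` (value). -/
noncomputable def gk (t u : ℝ) : ℝ := Real.sqrt (π / t) * Real.exp (-(u ^ 2 / (4 * t)))

lemma gauss_int {t : ℝ} (ht : 0 < t) (u : ℝ) :
    ∫ ξ : ℝ, Complex.exp (-(Complex.I * u * ξ)) * Complex.exp (-(t : ℂ) * ξ ^ 2)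
      = (gk t u : ℂ) := by
  have h := fourierIntegral_gaussian (b := (t : ℂ)) (by simpa using ht) (-u : ℂ)
  have e1 : ∀ ξ : ℝ, Complex.I * (-u : ℂ) * ξ = -(Complex.I * u * ξ) := by intro ξ; ring
  simp_rw [e1] at h
  rw [h, gk]
  have hπt : (0:ℝ) ≤ π / t := by positivity
  have : ((π : ℂ) / (t : ℂ)) = ((π / t : ℝ) : ℂ) := by push_cast; ring
  have h2 : (1 / 2 : ℂ) = ((1 / 2 : ℝ) : ℂ) := by norm_num
  rw [this, h2, ← Complex.ofReal_cpow hπt]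
  have : (-(-u:ℂ) ^ 2 / (4 * t)) = ((-(u ^ 2 / (4 * t)) : ℝ) : ℂ) := by push_cast; ring
  rw [this, ← Complex.ofReal_exp, ← Complex.ofReal_mul]
  norm_num [Real.sqrt_eq_rpow, Real.rpow_natCast]

lemma parseval_gauss {w : ℝ → ℝ} (hw : Integrable w) {t : ℝ} (ht : 0 < t) :
    ∫ ξ : ℝ, Real.exp (-(t * ξ ^ 2)) * ‖fourierNC w ξ‖ ^ 2
      = ∫ p : ℝ × ℝ, gk t (p.1 - p.2) * (w p.1 * w p.2) := by
  set Φ : ℝ → ℝ × ℝ → ℂ := fun ξ p =>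
    Complex.exp (-(t : ℂ) * ξ ^ 2) *
      ((Complex.exp (-(Complex.I * p.1 * ξ)) * w p.1) *
        (Complex.exp (Complex.I * p.2 * ξ) * w p.2)) with hΦ
  have hint : Integrable (Function.uncurry Φ) (volume.prod (volume.prod volume)) := by
    refine Integrable.mono'
      (g := fun q : ℝ × ℝ × ℝ => Real.exp (-t * q.1 ^ 2) * (|w q.2.1| * |w q.2.2|))
      ((integrable_exp_neg_mul_sq ht).mul_prod (hw.abs.mul_prod hw.abs)) ?_ ?_
    · have c1 : Continuous fun q : ℝ × ℝ × ℝ => Complex.exp (-(t : ℂ) * q.1 ^ 2) := by fun_prop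
      have c2 : Continuous fun q : ℝ × ℝ × ℝ => Complex.exp (-(Complex.I * q.2.1 * q.1)) := by fun_prop
      have c3 : Continuous fun q : ℝ × ℝ × ℝ => Complex.exp (Complex.I * q.2.2 * q.1) := by fun_prop
      have m1 : AEStronglyMeasurable (fun q : ℝ × ℝ × ℝ => ((w q.2.1 : ℝ) : ℂ))
          (volume.prod (volume.prod volume)) :=
        (Complex.continuous_ofReal.comp_aestronglyMeasurable hw.1.comp_fst).comp_snd
      have m2 : AEStronglyMeasurable (fun q : ℝ × ℝ × ℝ => ((w q.2.2 : ℝ) : ℂ))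
          (volume.prod (volume.prod volume)) :=
        (Complex.continuous_ofReal.comp_aestronglyMeasurable hw.1.comp_snd).comp_snd
      exact c1.aestronglyMeasurable.mul
        (((c2.aestronglyMeasurable.mul m1)).mul (c3.aestronglyMeasurable.mul m2))
    · filter_upwards with q
      have hn : ‖Function.uncurry Φ q‖ =
          Real.exp (-t * q.1 ^ 2) * (|w q.2.1| * |w q.2.2|) := by
        simp only [Function.uncurry, hΦ, norm_mul, Complex.norm_exp,
          Complex.norm_real, Real.norm_eq_abs]
        have e1 : (-(t : ℂ) * q.1 ^ 2).re = -t * q.1 ^ 2 := by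
          rw [show -(t : ℂ) * (q.1 : ℂ) ^ 2 = ((-t * q.1 ^ 2 : ℝ) : ℂ) by push_cast; ring,
            Complex.ofReal_re]
        have e2 : (-(Complex.I * q.2.1 * q.1)).re = 0 := by simp
        have e3 : (Complex.I * q.2.2 * q.1).re = 0 := by simp
        rw [e1, e2, e3]
        simp [Real.exp_zero]
        try ring
      rw [hn]
  have key : ((∫ ξ : ℝ, Real.exp (-(t * ξ ^ 2)) * ‖fourierNC w ξ‖ ^ 2 : ℝ) : ℂ)
      = ((∫ p : ℝ × ℝ, gk t (p.1 - p.2) * (w p.1 * w p.2) : ℝ) : ℂ) := by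
    calc ((∫ ξ : ℝ, Real.exp (-(t * ξ ^ 2)) * ‖fourierNC w ξ‖ ^ 2 : ℝ) : ℂ)
        = ∫ ξ : ℝ, ((Real.exp (-(t * ξ ^ 2)) * ‖fourierNC w ξ‖ ^ 2 : ℝ) : ℂ) :=
          (integral_ofReal).symm
      _ = ∫ ξ : ℝ, Complex.exp (-(t : ℂ) * ξ ^ 2) *
            (fourierNC w ξ * (starRingEnd ℂ) (fourierNC w ξ)) := by
          congr 1 with ξ
          have h1 : fourierNC w ξ * (starRingEnd ℂ) (fourierNC w ξ)
              = ((‖fourierNC w ξ‖ ^ 2 : ℝ) : ℂ) := by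
            rw [Complex.mul_conj]
            norm_cast
            rw [Complex.normSq_eq_norm_sq]
          have h2 : ((Real.exp (-(t * ξ ^ 2)) : ℝ) : ℂ) = Complex.exp (-(t : ℂ) * ξ ^ 2) := by
            rw [Complex.ofReal_exp]; congr 1; push_cast; ring
          rw [h1, ← h2, ← Complex.ofReal_mul]
      _ = ∫ ξ : ℝ, Complex.exp (-(t : ℂ) * ξ ^ 2) *
            ∫ p : ℝ × ℝ, (Complex.exp (-(Complex.I * p.1 * ξ)) * w p.1) *
              (Complex.exp (Complex.I * p.2 * ξ) * w p.2) ∂(volume.prod volume) := by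
          congr 1 with ξ
          rw [conj_fourierNC, fourierNC,
            ← integral_prod_mul (μ := volume) (ν := volume)
              (f := fun x : ℝ => Complex.exp (-(Complex.I * x * ξ)) * (w x : ℂ))
              (g := fun y : ℝ => Complex.exp (Complex.I * y * ξ) * (w y : ℂ))]
      _ = ∫ ξ : ℝ, ∫ p : ℝ × ℝ, Φ ξ p ∂(volume.prod volume) := by
          congr 1 with ξ
          rw [integral_const_mul]
      _ = ∫ p : ℝ × ℝ, (∫ ξ : ℝ, Φ ξ p) ∂(volume.prod volume) :=
          integral_integral_swap hint
      _ = ∫ p : ℝ × ℝ, ((gk t (p.1 - p.2) * (w p.1 * w p.2) : ℝ) : ℂ) ∂(volume.prod volume) := by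
          congr 1 with p
          have step : ∀ ξ : ℝ, Φ ξ p =
              (Complex.exp (-(Complex.I * ((p.1 - p.2 : ℝ) : ℂ) * ξ)) *
                Complex.exp (-(t : ℂ) * ξ ^ 2)) * ((w p.1 * w p.2 : ℝ) : ℂ) := by
            intro ξ
            have : (-(Complex.I * ((p.1 - p.2 : ℝ) : ℂ) * ξ)) =
                -(Complex.I * p.1 * ξ) + Complex.I * p.2 * ξ := by push_cast; ring
            rw [this, Complex.exp_add, hΦ]
            push_cast
            ring
          simp_rw [step]
          rw [integral_mul_const, gauss_int ht (p.1 - p.2)]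
          push_cast
          ring
      _ = ((∫ p : ℝ × ℝ, gk t (p.1 - p.2) * (w p.1 * w p.2) ∂(volume.prod volume) : ℝ) : ℂ) :=
          integral_ofReal
      _ = ((∫ p : ℝ × ℝ, gk t (p.1 - p.2) * (w p.1 * w p.2) : ℝ) : ℂ) := by
          rw [← Measure.volume_eq_prod]
  exact_mod_cast key

lemma gk_cont (t : ℝ) : Continuous (gk t) := by unfold gk; fun_prop

lemma gk_nonneg {t : ℝ} (u : ℝ) : 0 ≤ gk t u := by
  unfold gk; positivity

lemma gk_le {t : ℝ} (ht : 0 < t) (u : ℝ) : gk t u ≤ Real.sqrt (π / t) := by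
  unfold gk
  nth_rewrite 2 [← mul_one (Real.sqrt (π / t))]
  exact mul_le_mul_of_nonneg_left
    (Real.exp_le_one_iff.mpr (neg_nonpos.mpr (by positivity))) (Real.sqrt_nonneg _)

/-- The shear `(x, z) ↦ (x, x - z)` as a measurable equivalence. -/
noncomputable def shear : ℝ × ℝ ≃ᵐ ℝ × ℝ where
  toFun q := (q.1, q.1 - q.2)
  invFun q := (q.1, q.1 - q.2)
  left_inv q := by simp
  right_inv q := by simp
  measurable_toFun := (measurable_fst.prodMk (measurable_fst.sub measurable_snd))
  measurable_invFun := (measurable_fst.prodMk (measurable_fst.sub measurable_snd))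

lemma shear_mp : MeasurePreserving (fun q : ℝ × ℝ => (q.1, q.1 - q.2))
    (volume.prod volume) (volume.prod volume) := by
  have h1 : MeasurePreserving (fun q : ℝ × ℝ => (q.1, -q.2))
      (volume.prod volume) (volume.prod volume) :=
    (MeasurePreserving.id volume).prod (Measure.measurePreserving_neg volume)
  have h2 := measurePreserving_prod_add (μ := (volume : Measure ℝ)) (ν := (volume : Measure ℝ))
  have := h2.comp h1
  simpa [Function.comp_def, sub_eq_add_neg] using this

lemma integrable_Qconv {w : ℝ → ℝ} (hw : Integrable w) {t : ℝ} (ht : 0 < t) :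
    Integrable (fun p : ℝ × ℝ => gk t (p.1 - p.2) * (w p.1 * w p.2))
      (volume.prod volume) := by
  refine Integrable.mono'
    (g := fun p : ℝ × ℝ => Real.sqrt (π / t) * (|w p.1| * |w p.2|))
    ((hw.abs.mul_prod hw.abs).const_mul _) ?_ ?_
  · exact (((gk_cont t).comp (continuous_fst.sub continuous_snd)).aestronglyMeasurable).mul
      (hw.1.comp_fst.mul hw.1.comp_snd)
  · filter_upwards with p
    rw [Real.norm_eq_abs, abs_mul, _root_.abs_of_nonneg (gk_nonneg _), abs_mul]
    exact mul_le_mul_of_nonneg_right (gk_le ht _) (by positivity)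

lemma conv_form {w : ℝ → ℝ} (hw : Integrable w) {t : ℝ} (ht : 0 < t) :
    ∫ p : ℝ × ℝ, gk t (p.1 - p.2) * (w p.1 * w p.2)
      = ∫ z : ℝ, gk t z * ∫ x : ℝ, w x * w (x - z) := by
  rw [Measure.volume_eq_prod]
  set Q : ℝ × ℝ → ℝ := fun p => gk t (p.1 - p.2) * (w p.1 * w p.2) with hQ
  have hQint := integrable_Qconv hw ht
  have hcomp : ∫ q : ℝ × ℝ, Q ((fun q : ℝ × ℝ => (q.1, q.1 - q.2)) q) ∂(volume.prod volume)
      = ∫ p, Q p ∂(volume.prod volume) :=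
    shear_mp.integral_comp shear.measurableEmbedding Q
  have hint2 : Integrable (fun q : ℝ × ℝ => Q (q.1, q.1 - q.2)) (volume.prod volume) := by
    have := (shear_mp.integrable_comp_emb shear.measurableEmbedding (g := Q)).mpr hQint
    exact this
  have hQφ : ∀ q : ℝ × ℝ, Q (q.1, q.1 - q.2) = gk t q.2 * (w q.1 * w (q.1 - q.2)) := by
    intro q
    simp only [hQ]
    ring_nf
  calc ∫ p, Q p ∂(volume.prod volume)
      = ∫ q : ℝ × ℝ, gk t q.2 * (w q.1 * w (q.1 - q.2)) ∂(volume.prod volume) := by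
        rw [← hcomp]; exact integral_congr_ae (Filter.Eventually.of_forall fun q => hQφ q)
    _ = ∫ x : ℝ, ∫ z : ℝ, gk t z * (w x * w (x - z)) := by
        rw [integral_prod]
        exact (hint2.congr (Filter.Eventually.of_forall fun q => (hQφ q)))
    _ = ∫ z : ℝ, ∫ x : ℝ, gk t z * (w x * w (x - z)) := by
        apply integral_integral_swap
        exact (hint2.congr (Filter.Eventually.of_forall fun q => (hQφ q)))
    _ = ∫ z : ℝ, gk t z * ∫ x : ℝ, w x * w (x - z) := by
        congr 1 with z
        rw [integral_const_mul]

lemma integrable_F {w : ℝ → ℝ} (hw : Integrable w) :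
    Integrable (fun z : ℝ => ∫ x : ℝ, w x * w (x - z)) := by
  have hg : Integrable (fun y : ℝ => w (-y)) := hw.comp_neg
  have h := hw.integrable_convolution (L := ContinuousLinearMap.mul ℝ ℝ)
    (μ := volume) hg
  refine h.congr (Filter.Eventually.of_forall fun z => ?_)
  rw [convolution_def]
  congr 1 with x
  simp [neg_sub]

lemma continuous_F {w : ℝ → ℝ} (hw2 : MemLp w 2 (volume : Measure ℝ)) :
    Continuous (fun z : ℝ => ∫ x : ℝ, w x * w (x - z)) := by
  have fact2 : Fact ((1:ℝ≥0∞) ≤ 2) := ⟨by norm_num⟩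
  set W : Lp ℝ 2 (volume : Measure ℝ) := hw2.toLp w with hWdef
  set T : ℝ → C(ℝ, ℝ) := fun z => ⟨fun x => x - z, by continuity⟩ with hT
  have hTmp : ∀ z : ℝ, MeasurePreserving (T z) volume volume := fun z =>
    measurePreserving_sub_right volume z
  have hTcont : Continuous T := by
    apply ContinuousMap.continuous_of_continuous_uncurry
    exact continuous_snd.sub continuous_fst
  have hGcont : Continuous fun z : ℝ => Lp.compMeasurePreserving (T z) (hTmp z) W :=
    Continuous.compMeasurePreservingLp continuous_const hTcont hTmp (by norm_num)
  have key : ∀ z : ℝ, (∫ x : ℝ, w x * w (x - z))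
      = inner (𝕜 := ℝ) W (Lp.compMeasurePreserving (T z) (hTmp z) W) := by
    intro z
    rw [L2.inner_def]
    have h1 : W =ᵐ[volume] w := hw2.coeFn_toLp
    have h2 : (Lp.compMeasurePreserving (T z) (hTmp z) W : ℝ → ℝ)
        =ᵐ[volume] (W : ℝ → ℝ) ∘ (T z) := Lp.coeFn_compMeasurePreserving W (hTmp z)
    have h3 : ((W : ℝ → ℝ) ∘ (T z)) =ᵐ[volume] (fun x => w (x - z)) := by
      have := (hTmp z).quasiMeasurePreserving.ae_eq_comp h1
      exact this
    refine (integral_congr_ae ?_).symm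
    filter_upwards [h1, h2.trans h3] with x hx1 hx2
    rw [RCLike.inner_apply', RCLike.conj_to_real, hx1, hx2]
  simp_rw [key]
  exact Continuous.inner continuous_const hGcont

lemma tendsto_peak {w : ℝ → ℝ} (hw : Integrable w) (hw2 : MemLp w 2 (volume : Measure ℝ)) :
    Tendsto (fun c : ℝ => ∫ z : ℝ,
        (Real.sqrt (π * c) * Real.exp (-(π ^ 2 * c * z ^ 2))) * ∫ x : ℝ, w x * w (x - z))
      atTop (𝓝 (∫ x : ℝ, w x * w (x - 0))) := by
  set F : ℝ → ℝ := fun z => ∫ x : ℝ, w x * w (x - z) with hF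
  have hfC : Integrable (fun z : ℝ => (F z : ℂ)) := (integrable_F hw).ofReal
  have hcont : ContinuousAt (fun z : ℝ => (F z : ℂ)) 0 :=
    (Complex.continuous_ofReal.comp (continuous_F hw2)).continuousAt
  have H := Real.tendsto_integral_gaussian_smul' (V := ℝ) (E := ℂ)
    (f := fun z : ℝ => (F z : ℂ)) hfC (v := 0) hcont
  have Heq : ∀ᶠ c : ℝ in atTop,
      (∫ z : ℝ, ((π * c : ℂ) ^ (Module.finrank ℝ ℝ / 2 : ℂ) *
          Complex.exp (-π ^ 2 * c * ‖(0:ℝ) - z‖ ^ 2)) • (F z : ℂ))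
        = ((∫ z : ℝ, (Real.sqrt (π * c) * Real.exp (-(π ^ 2 * c * z ^ 2))) * F z : ℝ) : ℂ) := by
    filter_upwards [Ioi_mem_atTop 0] with c (hc : 0 < c)
    calc ∫ z : ℝ, ((π * c : ℂ) ^ (Module.finrank ℝ ℝ / 2 : ℂ) *
          Complex.exp (-π ^ 2 * c * ‖(0:ℝ) - z‖ ^ 2)) • (F z : ℂ)
        = ∫ z : ℝ, ((Real.sqrt (π * c) * Real.exp (-(π ^ 2 * c * z ^ 2)) * F z : ℝ) : ℂ) := by
          congr 1 with z
          have e0 : ((Module.finrank ℝ ℝ : ℂ) / 2) = ((1 / 2 : ℝ) : ℂ) := by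
            norm_num
          have e1 : (π * c : ℂ) = ((π * c : ℝ) : ℂ) := by push_cast; ring
          have e2 : (-(π:ℂ) ^ 2 * c * (‖(0:ℝ) - z‖ : ℂ) ^ 2)
              = ((-(π ^ 2 * c * z ^ 2) : ℝ) : ℂ) := by
            push_cast
            simp only [zero_sub, norm_neg, Real.norm_eq_abs]
            norm_cast
            rw [_root_.sq_abs]
            ring
          rw [e1, e0, ← Complex.ofReal_cpow (by positivity), e2, ← Complex.ofReal_exp]
          rw [smul_eq_mul]
          push_cast
          rw [← Real.sqrt_eq_rpow]
          try ring
      _ = ((∫ z : ℝ, Real.sqrt (π * c) * Real.exp (-(π ^ 2 * c * z ^ 2)) * F z : ℝ) : ℂ) :=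
          integral_ofReal
  have H2 : Tendsto (fun c : ℝ =>
      ((∫ z : ℝ, (Real.sqrt (π * c) * Real.exp (-(π ^ 2 * c * z ^ 2))) * F z : ℝ) : ℂ))
      atTop (𝓝 ((F 0 : ℝ) : ℂ)) := H.congr' Heq
  have H3 := (Complex.continuous_re.tendsto _).comp H2
  simpa [hF, Function.comp_def] using H3

lemma plancherel_ineq {w : ℝ → ℝ} (hw : Integrable w) (hw2 : MemLp w 2 (volume : Measure ℝ))
    (hInt : Integrable (fun ξ : ℝ => ‖fourierNC w ξ‖ ^ 2)) :
    ∫ x : ℝ, (w x) ^ 2 ≤ (1 / (2 * π)) * ∫ ξ : ℝ, ‖fourierNC w ξ‖ ^ 2 := by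
  have hlim := tendsto_peak hw hw2
  have hF0 : (∫ x : ℝ, w x * w (x - 0)) = ∫ x : ℝ, (w x) ^ 2 := by
    simp only [sub_zero, ← pow_two]
  rw [hF0] at hlim
  refine le_of_tendsto hlim ?_
  filter_upwards [Ioi_mem_atTop 0] with c (hc : 0 < c)
  set t : ℝ := 1 / (4 * π ^ 2 * c) with htdef
  have ht : 0 < t := by positivity
  have hgk : ∀ z : ℝ, gk t z
      = (2 * π) * (Real.sqrt (π * c) * Real.exp (-(π ^ 2 * c * z ^ 2))) := by
    intro z
    unfold gk
    have h1 : π / t = (2 * π) ^ 2 * (π * c) := by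
      rw [htdef]; field_simp; ring
    have h2 : -(z ^ 2 / (4 * t)) = -(π ^ 2 * c * z ^ 2) := by
      rw [htdef]; field_simp
    rw [h1, h2, Real.sqrt_mul (by positivity), Real.sqrt_sq (by positivity)]
    ring
  have key : ∫ ξ : ℝ, Real.exp (-(t * ξ ^ 2)) * ‖fourierNC w ξ‖ ^ 2
      = (2 * π) * ∫ z : ℝ, (Real.sqrt (π * c) * Real.exp (-(π ^ 2 * c * z ^ 2)))
          * ∫ x : ℝ, w x * w (x - z) := by
    rw [parseval_gauss hw ht, conv_form hw ht, ← integral_const_mul]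
    congr 1 with z
    rw [hgk]
    ring
  have mono : ∫ ξ : ℝ, Real.exp (-(t * ξ ^ 2)) * ‖fourierNC w ξ‖ ^ 2
      ≤ ∫ ξ : ℝ, ‖fourierNC w ξ‖ ^ 2 := by
    refine integral_mono_of_nonneg ?_ hInt ?_
    · filter_upwards with ξ; positivity
    · filter_upwards with ξ
      calc Real.exp (-(t * ξ ^ 2)) * ‖fourierNC w ξ‖ ^ 2
          ≤ 1 * ‖fourierNC w ξ‖ ^ 2 := by
            gcongr
            exact Real.exp_le_one_iff.mpr (neg_nonpos.mpr (by positivity))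
        _ = ‖fourierNC w ξ‖ ^ 2 := one_mul _
  rw [key] at mono
  have hπ : 0 < 2 * π := by positivity
  calc (∫ z : ℝ, (Real.sqrt (π * c) * Real.exp (-(π ^ 2 * c * z ^ 2)))
          * ∫ x : ℝ, w x * w (x - z))
      = (1 / (2 * π)) * ((2 * π) * ∫ z : ℝ,
          (Real.sqrt (π * c) * Real.exp (-(π ^ 2 * c * z ^ 2)))
            * ∫ x : ℝ, w x * w (x - z)) := by
        field_simp
    _ ≤ (1 / (2 * π)) * ∫ ξ : ℝ, ‖fourierNC w ξ‖ ^ 2 := by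
        apply mul_le_mul_of_nonneg_left mono (by positivity)

section aux
variable {w : ℝ → ℝ} {α : ℝ}

lemma sq_norm_le (hw : Integrable w) (ξ : ℝ) :
    ‖fourierNC w ξ‖ ^ 2 ≤ (∫ x, |w x|) ^ 2 := by
  have h := fourierNC_norm_le w ξ
  exact pow_le_pow_left₀ (norm_nonneg _) h 2

lemma h_integrable (hα : 0 < α) (hw : Integrable w)
    (hα' : Integrable (fun ξ : ℝ => |ξ| ^ α * ‖fourierNC w ξ‖ ^ 2)) :
    Integrable (fun ξ : ℝ => ‖fourierNC w ξ‖ ^ 2) := by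
  set M : ℝ := ∫ x, |w x| with hM
  have hg : Integrable (fun ξ : ℝ =>
      (Icc (-1 : ℝ) 1).indicator (fun _ => M ^ 2) ξ + |ξ| ^ α * ‖fourierNC w ξ‖ ^ 2) := by
    refine Integrable.add ?_ hα'
    rw [integrable_indicator_iff measurableSet_Icc]
    exact integrableOn_const (by rw [Real.volume_Icc]; exact ENNReal.ofReal_ne_top)
  refine Integrable.mono' hg
    (((fourierNC_continuous hw).norm.pow 2).aestronglyMeasurable) ?_
  filter_upwards with ξ
  rw [Real.norm_eq_abs, _root_.abs_of_nonneg (by positivity)]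
  by_cases hξ : |ξ| ≤ 1
  · have h1 : ξ ∈ Icc (-1 : ℝ) 1 := by
      rw [mem_Icc]; constructor <;> [linarith [abs_le.mp hξ]; linarith [abs_le.mp hξ]]
    rw [indicator_of_mem h1]
    have := sq_norm_le hw ξ
    nlinarith [Real.rpow_nonneg (abs_nonneg ξ) α, sq_nonneg ‖fourierNC w ξ‖]
  · push_neg at hξ
    have h2 : (1 : ℝ) ≤ |ξ| ^ α := Real.one_le_rpow hξ.le hα.le
    have h3 : ‖fourierNC w ξ‖ ^ 2 ≤ |ξ| ^ α * ‖fourierNC w ξ‖ ^ 2 :=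
      le_mul_of_one_le_left (by positivity) h2
    have h4 : (0:ℝ) ≤ (Icc (-1 : ℝ) 1).indicator (fun _ => M ^ 2) ξ :=
      indicator_nonneg (fun _ _ => by positivity) ξ
    linarith

lemma freq_split (hα : 0 < α) (hw : Integrable w)
    (hα' : Integrable (fun ξ : ℝ => |ξ| ^ α * ‖fourierNC w ξ‖ ^ 2))
    {R : ℝ} (hR : 0 < R) :
    ∫ ξ : ℝ, ‖fourierNC w ξ‖ ^ 2
      ≤ 2 * R * (∫ x, |w x|) ^ 2
        + R ^ (-α) * ∫ ξ : ℝ, |ξ| ^ α * ‖fourierNC w ξ‖ ^ 2 := by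
  set M : ℝ := ∫ x, |w x| with hM
  have hbody : ∀ ξ : ℝ, ‖fourierNC w ξ‖ ^ 2
      ≤ (Icc (-R) R).indicator (fun _ => M ^ 2) ξ
        + R ^ (-α) * (|ξ| ^ α * ‖fourierNC w ξ‖ ^ 2) := by
    intro ξ
    by_cases hξ : |ξ| ≤ R
    · have h1 : ξ ∈ Icc (-R) R := by
        rcases abs_le.mp hξ with ⟨ha, hb⟩; exact mem_Icc.mpr ⟨ha, hb⟩
      rw [indicator_of_mem h1]
      have := sq_norm_le hw ξ
      have h5 : (0:ℝ) ≤ R ^ (-α) * (|ξ| ^ α * ‖fourierNC w ξ‖ ^ 2) := by positivity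
      linarith
    · push_neg at hξ
      have h2 : (1 : ℝ) ≤ R ^ (-α) * |ξ| ^ α := by
        rw [Real.rpow_neg hR.le]
        calc (1:ℝ) = 1 ^ α := (Real.one_rpow α).symm
          _ ≤ (|ξ| / R) ^ α :=
            Real.rpow_le_rpow (by norm_num) ((one_le_div hR).mpr hξ.le) hα.le
          _ = (R ^ α)⁻¹ * |ξ| ^ α := by
            rw [Real.div_rpow (abs_nonneg ξ) hR.le]; ring
      have h3 : ‖fourierNC w ξ‖ ^ 2 ≤ R ^ (-α) * (|ξ| ^ α * ‖fourierNC w ξ‖ ^ 2) := by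
        rw [← mul_assoc]
        exact le_mul_of_one_le_left (by positivity) h2
      have h4 : (0:ℝ) ≤ (Icc (-R) R).indicator (fun _ => M ^ 2) ξ :=
        indicator_nonneg (fun _ _ => by positivity) ξ
      linarith
  have hg : Integrable (fun ξ : ℝ =>
      (Icc (-R) R).indicator (fun _ => M ^ 2) ξ
        + R ^ (-α) * (|ξ| ^ α * ‖fourierNC w ξ‖ ^ 2)) := by
    refine Integrable.add ?_ (hα'.const_mul _)
    rw [integrable_indicator_iff measurableSet_Icc]
    exact integrableOn_const (by rw [Real.volume_Icc]; exact ENNReal.ofReal_ne_top)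
  calc ∫ ξ : ℝ, ‖fourierNC w ξ‖ ^ 2
      ≤ ∫ ξ : ℝ, ((Icc (-R) R).indicator (fun _ => M ^ 2) ξ
          + R ^ (-α) * (|ξ| ^ α * ‖fourierNC w ξ‖ ^ 2)) :=
        integral_mono (h_integrable hα hw hα') hg hbody
    _ = 2 * R * M ^ 2 + R ^ (-α) * ∫ ξ : ℝ, |ξ| ^ α * ‖fourierNC w ξ‖ ^ 2 := by
        rw [integral_add ?h1 (hα'.const_mul _), integral_indicator_const, integral_const_mul]
        · rw [measureReal_def, Real.volume_Icc, smul_eq_mul, ENNReal.toReal_ofReal (by linarith)]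
          ring
        · exact measurableSet_Icc
        case h1 =>
          rw [integrable_indicator_iff measurableSet_Icc]
          exact integrableOn_const (by rw [Real.volume_Icc]; exact ENNReal.ofReal_ne_top)
end aux

end NashAux


/-- Nash inequality for `Lambda^alpha`:
`‖w‖₂^(2(1+α)) ≤ C_N (∫ |ξ|^α |w^(ξ)|² dξ) ‖w‖₁^(2α)`. -/
theorem nash_inequality_fracLap (α : ℝ) (hα : 0 < α) :
    ∃ C > (0:ℝ), ∀ w : ℝ → ℝ, Integrable w → MemLp w 2 volume →
      Integrable (fun ξ => |ξ| ^ α * ‖fourierNC w ξ‖ ^ 2) →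
      (∫ x : ℝ, (w x) ^ 2) ^ (1 + α) ≤
        C * (∫ ξ : ℝ, |ξ| ^ α * ‖fourierNC w ξ‖ ^ 2) *
          (∫ x : ℝ, |w x|) ^ (2 * α) := by
  have h1α : (0:ℝ) < 1 + α := by linarith
  refine ⟨(3:ℝ) ^ (1 + α), Real.rpow_pos_of_pos (by norm_num) _, ?_⟩
  intro w hw hw2 hα'
  set N : ℝ := ∫ x : ℝ, (w x) ^ 2 with hNdef
  set M : ℝ := ∫ x : ℝ, |w x| with hMdef
  set A : ℝ := ∫ ξ : ℝ, |ξ| ^ α * ‖fourierNC w ξ‖ ^ 2 with hAdef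
  have hN0 : 0 ≤ N := integral_nonneg fun x => sq_nonneg _
  have hM0 : 0 ≤ M := integral_nonneg fun x => abs_nonneg _
  have hA0 : 0 ≤ A := integral_nonneg fun ξ => by positivity
  have main : ∀ R : ℝ, 0 < R → N ≤ 2 * R * M ^ 2 + R ^ (-α) * A := by
    intro R hR
    have p1 := plancherel_ineq hw hw2 (h_integrable hα hw hα')
    have p2 := freq_split hα hw hα' hR
    have hX : (0:ℝ) ≤ 2 * R * M ^ 2 + R ^ (-α) * A := by positivity
    have hc : (1 / (2 * π)) * ∫ ξ : ℝ, ‖fourierNC w ξ‖ ^ 2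
        ≤ 1 * (2 * R * M ^ 2 + R ^ (-α) * A) := by
      rw [one_mul]
      calc (1 / (2 * π)) * ∫ ξ : ℝ, ‖fourierNC w ξ‖ ^ 2
          ≤ (1 / (2 * π)) * (2 * R * M ^ 2 + R ^ (-α) * A) := by
            apply mul_le_mul_of_nonneg_left p2 (by positivity)
        _ ≤ 2 * R * M ^ 2 + R ^ (-α) * A := by
            nth_rewrite 2 [← one_mul (2 * R * M ^ 2 + R ^ (-α) * A)]
            apply mul_le_mul_of_nonneg_right _ hX
            rw [div_le_one (by positivity)]
            linarith [Real.pi_gt_three]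
    rw [one_mul] at hc
    exact p1.trans hc
  by_cases hM : M = 0
  · have hw0 : w =ᵐ[volume] 0 := by
      have habs : (fun x => |w x|) =ᵐ[volume] 0 := by
        rw [← integral_eq_zero_iff_of_nonneg (fun x => abs_nonneg (w x)) hw.abs]
        exact hM.symm ▸ hMdef.symm
      filter_upwards [habs] with x hx
      simpa using abs_eq_zero.mp hx
    have hNz : N = 0 := by
      rw [hNdef]
      rw [integral_congr_ae (g := fun _ : ℝ => (0:ℝ)) (by filter_upwards [hw0] with x hx; simp [hx])]
      simp
    rw [hNz, hM, Real.zero_rpow h1α.ne', Real.zero_rpow (by positivity : (2*α) ≠ 0)]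
    simp
  · have hMpos : 0 < M := lt_of_le_of_ne hM0 (Ne.symm hM)
    have hM2 : 0 < M ^ 2 := by positivity
    by_cases hA : A = 0
    · have hN : N ≤ 0 := by
        have ht : Tendsto (fun R : ℝ => 2 * R * M ^ 2 + R ^ (-α) * A) (𝓝[>] (0:ℝ)) (𝓝 0) := by
          rw [hA]
          simp only [mul_zero, add_zero]
          have h8 : Tendsto (fun R : ℝ => 2 * R * M ^ 2) (𝓝 (0:ℝ)) (𝓝 (2 * 0 * M ^ 2)) :=
            ((continuous_const.mul continuous_id).mul continuous_const).tendsto 0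
          rw [show (2 * (0:ℝ) * M ^ 2) = 0 by ring] at h8
          exact h8.mono_left nhdsWithin_le_nhds
        refine ge_of_tendsto ht ?_
        filter_upwards [self_mem_nhdsWithin] with R (hR : R ∈ Ioi (0:ℝ))
        exact main R hR
      have hNz : N = 0 := le_antisymm hN hN0
      rw [hNz, hA, Real.zero_rpow h1α.ne']
      simp
    · have hApos : 0 < A := lt_of_le_of_ne hA0 (Ne.symm hA)
      set β : ℝ := 1 / (1 + α) with hβdef
      have hD0 : (0:ℝ) < A / M ^ 2 := div_pos hApos hM2
      set R : ℝ := (A / M ^ 2) ^ β with hRdef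
      have hRpos : 0 < R := Real.rpow_pos_of_pos hD0 _
      have hβ1 : β * (1 + α) = 1 := by rw [hβdef]; field_simp
      have key1 : R * M ^ 2 = A ^ β * (M ^ 2) ^ (α / (1 + α)) := by
        rw [hRdef, Real.div_rpow hA0 hM2.le,
          show α / (1 + α) = 1 - β by rw [hβdef]; field_simp; try ring,
          Real.rpow_sub hM2, Real.rpow_one]
        field_simp
      have h5 : R ^ ((1:ℝ) + α) = A / M ^ 2 := by
        rw [hRdef, ← Real.rpow_mul hD0.le, hβ1, Real.rpow_one]
      have hkey : R ^ (-α) = R * M ^ 2 / A := by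
        have h6 : R ^ (-α) = R ^ (1:ℝ) / R ^ ((1:ℝ) + α) := by
          rw [← Real.rpow_sub hRpos]; congr 1; ring
        rw [h6, Real.rpow_one, h5]
        field_simp
      have key2 : R ^ (-α) * A = R * M ^ 2 := by
        rw [hkey]; field_simp
      have hle : N ≤ 3 * (R * M ^ 2) := by
        have h7 := main R hRpos
        rw [key2] at h7
        linarith
      have step : N ^ (1 + α) ≤ (3 * (R * M ^ 2)) ^ (1 + α) :=
        Real.rpow_le_rpow hN0 hle h1α.le
      have e2 : ((3:ℝ) * (R * M ^ 2)) ^ (1 + α) = 3 ^ (1 + α) * A * M ^ (2 * α) := by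
        rw [Real.mul_rpow (by norm_num) (by positivity), key1,
          Real.mul_rpow (Real.rpow_nonneg hA0 _) (Real.rpow_nonneg (by positivity) _),
          ← Real.rpow_mul hA0, hβ1, Real.rpow_one,
          ← Real.rpow_mul (by positivity : (0:ℝ) ≤ M ^ 2),
          show α / (1 + α) * (1 + α) = α by field_simp,
          show (M:ℝ) ^ 2 = M ^ ((2:ℕ):ℝ) by rw [Real.rpow_natCast],
          ← Real.rpow_mul hM0,
          show ((2:ℕ):ℝ) * α = 2 * α by norm_num]
        ring
      exact step.trans (le_of_eq e2)
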